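/- There exists a constant C > 0 such that for all integers k, m, r with k ≥ 2, m ≥ 2 and 1 ≤ r ≤ k, with probability at least 0.99 over H drawn from B(k, m, 1/2): (1) H has r-fold balancedness C·√(r·m·log k), and (2) every right vertex of H has degree at most k/2 + C·√(k·log m). -/

import Mathlib

open MeasureTheory
open Finset

/-- The random bipartite graph model `B(k, m, p)`: left vertex set `Fin k`, right vertex
set `Fin m`, each of the `k·m` edges present independently with probability `p`
(`true` means present). -/
noncomputable def bipartiteER (k m : ℕ) (p : ENNReal) (hp : p ≤ 1) :
    Measure (Fin k × Fin m → Bool) :=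
  Measure.pi fun _ : Fin k × Fin m => (PMF.bernoulli p.toNNReal
    (by simpa using ENNReal.toNNReal_mono ENNReal.one_ne_top hp)).toMeasure

/-- `H` has `r`-fold balancedness `Δ`: for every nonempty `S ⊆ U` with `|S| ≤ r`,
the vector `u_S(j) = ∏_{i ∈ S} H(i,j)` (with `±1` entries) satisfies
`|∑_j u_S(j)| ≤ Δ`. -/
def FoldBalanced {k m : ℕ} (H : Fin k → Fin m → Bool) (r : ℕ) (Δ : ℝ) : Prop :=
  ∀ S : Finset (Fin k), S.Nonempty → S.card ≤ r →
    |∑ j : Fin m, ∏ i ∈ S, (if H i j then (1 : ℝ) else -1)| ≤ Δ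

/-- There is a constant `C > 0` such that for all `k, m ≥ 2` and `1 ≤ r ≤ k`, with
probability at least `0.99` over `H ∼ B(k, m, 1/2)`: (1) `H` has `r`-fold balancedness
`C·√(r·m·log k)`, and (2) every right vertex of `H` has degree at most
`k/2 + C·√(k·log m)`. -/
lemma bER_singleton (k m : ℕ) (H : Fin k × Fin m → Bool) :
    bipartiteER k m (1/2) (by norm_num) {H} = (2 : ENNReal)⁻¹ ^ (k * m) := by
  rw [← Set.univ_pi_singleton H, bipartiteER, Measure.pi_pi]
  have h1 : ∀ p : Fin k × Fin m, (PMF.bernoulli (1/2 : ENNReal).toNNReal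
      (by simpa using ENNReal.toNNReal_mono ENNReal.one_ne_top (by norm_num : (1/2 : ENNReal) ≤ 1))).toMeasure {H p}
      = (2 : ENNReal)⁻¹ := by
    intro p
    rw [PMF.toMeasure_apply_singleton _ _ (measurableSet_singleton _), PMF.bernoulli_apply]
    have hp2 : (1/2 : ENNReal).toNNReal = 2⁻¹ := by
      rw [one_div, ENNReal.toNNReal_inv, ENNReal.toNNReal_ofNat]
    rw [hp2]
    cases H p
    · rw [Bool.cond_false, ENNReal.coe_sub]; simpa using ENNReal.one_sub_inv_two
    · simp
  simp only [h1, Finset.prod_const, Finset.card_univ, Fintype.card_prod, Fintype.card_fin]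

lemma bER_apply (k m : ℕ) (s : Finset (Fin k × Fin m → Bool)) :
    bipartiteER k m (1/2) (by norm_num) ↑s
      = ENNReal.ofReal ((s.card : ℝ) * (1/2) ^ (k * m)) := by
  classical
  have : (↑s : Set (Fin k × Fin m → Bool)) = ⋃ H ∈ s, {H} := (Set.biUnion_of_singleton _).symm
  rw [this, measure_biUnion_finset (by
      intro x _ y _ hxy
      simp [Function.onFun, Set.disjoint_singleton, hxy])
    (fun b _ => measurableSet_singleton b)]
  simp only [bER_singleton]
  have h2 : (2 : ENNReal)⁻¹ = ENNReal.ofReal (1/2) := by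
    rw [ENNReal.ofReal_div_of_pos (by norm_num)]
    norm_num
  rw [Finset.sum_const, nsmul_eq_mul, h2, ← ENNReal.ofReal_pow (by norm_num),
    ← ENNReal.ofReal_natCast, ← ENNReal.ofReal_mul (by positivity)]

def sgn (b : Bool) : ℝ := if b then 1 else -1

lemma sum_sgn_bool : ∑ b : Bool, sgn b = 0 := by simp [sgn]

lemma exp_pm (lam x : ℝ) (hx : x = 1 ∨ x = -1) :
    Real.exp (lam * x) = Real.cosh lam + Real.sinh lam * x := by
  rcases hx with h | h <;> subst h
  · rw [mul_one, mul_one, Real.cosh_add_sinh]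
  · rw [mul_neg_one, mul_neg_one, ← sub_eq_add_neg, Real.cosh_sub_sinh]

lemma prod_pm {α : Type*} (S : Finset α) (f : α → ℝ) (h : ∀ i ∈ S, f i = 1 ∨ f i = -1) :
    (∏ i ∈ S, f i) = 1 ∨ (∏ i ∈ S, f i) = -1 := by
  refine Finset.prod_induction f (fun x => x = 1 ∨ x = -1) ?_ (Or.inl rfl) h
  rintro a b (ha | ha) (hb | hb) <;> subst ha <;> subst hb <;> norm_num

lemma sum_prod_sgn (k : ℕ) (S : Finset (Fin k)) (hS : S.Nonempty) :
    ∑ c : Fin k → Bool, ∏ i ∈ S, sgn (c i) = 0 := by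
  have h1 : ∀ c : Fin k → Bool, ∏ i ∈ S, sgn (c i)
      = ∏ i : Fin k, (if i ∈ S then sgn (c i) else 1) := by
    intro c
    rw [Finset.prod_ite_mem, Finset.univ_inter]
  simp only [h1]
  rw [← Fintype.piFinset_univ,
    ← Finset.prod_univ_sum (fun _ : Fin k => (Finset.univ : Finset Bool))
      (fun i b => if i ∈ S then sgn b else 1)]
  obtain ⟨i₀, hi₀⟩ := hS
  refine Finset.prod_eq_zero (Finset.mem_univ i₀) ?_
  norm_num [hi₀, sgn]

lemma inner_mgf (k : ℕ) (S : Finset (Fin k)) (hS : S.Nonempty) (lam : ℝ) :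
    ∑ c : Fin k → Bool, Real.exp (lam * ∏ i ∈ S, sgn (c i))
      = 2 ^ k * Real.cosh lam := by
  have h1 : ∀ c : Fin k → Bool, Real.exp (lam * ∏ i ∈ S, sgn (c i))
      = Real.cosh lam + Real.sinh lam * ∏ i ∈ S, sgn (c i) :=
    fun c => exp_pm _ _ (prod_pm _ _ (fun i _ => by by_cases h : c i <;> simp [sgn, h]))
  simp only [h1]
  rw [Finset.sum_add_distrib, Finset.sum_const, ← Finset.mul_sum, sum_prod_sgn k S hS]
  simp [Fintype.card_fun]

def colEquiv (k m : ℕ) : (Fin m → Fin k → Bool) ≃ (Fin k × Fin m → Bool) where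
  toFun g := fun p => g p.2 p.1
  invFun H := fun j i => H (i, j)
  left_inv g := rfl
  right_inv H := rfl

lemma mgf_balanced (k m : ℕ) (S : Finset (Fin k)) (hS : S.Nonempty) (lam : ℝ) :
    ∑ H : Fin k × Fin m → Bool, Real.exp (lam * ∑ j : Fin m, ∏ i ∈ S, sgn (H (i, j)))
      = ((2:ℝ) ^ k * Real.cosh lam) ^ m := by
  rw [← Equiv.sum_comp (colEquiv k m)]
  have h1 : ∀ g : Fin m → Fin k → Bool,
      Real.exp (lam * ∑ j : Fin m, ∏ i ∈ S, sgn ((colEquiv k m) g (i, j)))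
        = ∏ j : Fin m, Real.exp (lam * ∏ i ∈ S, sgn (g j i)) := by
    intro g
    rw [mul_sum, Real.exp_sum]
    rfl
  simp only [h1]
  rw [← Fintype.piFinset_univ,
    ← Finset.prod_univ_sum (fun _ : Fin m => (Finset.univ : Finset (Fin k → Bool)))
      (fun _ c => Real.exp (lam * ∏ i ∈ S, sgn (c i)))]
  simp only [inner_mgf k S hS lam, Finset.prod_const, Finset.card_univ, Fintype.card_fin]

lemma mgf_degree (k m : ℕ) (hm : 0 < m) (v : Fin m) (lam : ℝ) :
    ∑ H : Fin k × Fin m → Bool, Real.exp (lam * ∑ i : Fin k, sgn (H (i, v)))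
      = (2:ℝ) ^ (k * m) * Real.cosh lam ^ k := by
  have h1 : ∀ H : Fin k × Fin m → Bool, Real.exp (lam * ∑ i : Fin k, sgn (H (i, v)))
      = ∏ p : Fin k × Fin m, (if p.2 = v then Real.exp (lam * sgn (H p)) else 1) := by
    intro H
    rw [mul_sum, Real.exp_sum, Fintype.prod_prod_type]
    congr 1
    ext i
    rw [Finset.prod_ite_eq' Finset.univ v (fun j => Real.exp (lam * sgn (H (i, j))))]
    simp
  simp only [h1]
  rw [← Fintype.piFinset_univ,
    ← Finset.prod_univ_sum (fun _ : Fin k × Fin m => (Finset.univ : Finset Bool))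
      (fun p b => if p.2 = v then Real.exp (lam * sgn b) else 1)]
  have h2 : ∀ p : Fin k × Fin m,
      (∑ b : Bool, if p.2 = v then Real.exp (lam * sgn b) else 1)
        = if p.2 = v then 2 * Real.cosh lam else 2 := by
    intro p
    by_cases h : p.2 = v <;> simp [h, Fintype.sum_bool, sgn, Real.cosh_eq]
    ring
  simp only [h2]
  rw [Fintype.prod_prod_type]
  have h3 : (∏ j : Fin m, if j = v then 2 * Real.cosh lam else 2)
      = 2 * Real.cosh lam * 2 ^ (m - 1) := by
    rw [Finset.prod_ite, Finset.prod_const, Finset.prod_const, Finset.filter_eq',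
      if_pos (Finset.mem_univ v), Finset.card_singleton, pow_one]
    congr 2
    rw [Finset.filter_ne', Finset.card_erase_of_mem (Finset.mem_univ v), Finset.card_univ,
      Fintype.card_fin]
  simp only [h3, Finset.prod_const, Finset.card_univ, Fintype.card_fin]
  have hm' : m - 1 + 1 = m := Nat.succ_pred_eq_of_pos hm
  calc (2 * Real.cosh lam * 2 ^ (m - 1)) ^ k
      = ((2:ℝ) ^ m * Real.cosh lam) ^ k := by
        have : (2:ℝ) * 2 ^ (m-1) = 2 ^ m := by rw [← pow_succ', hm']
        rw [mul_comm (2:ℝ) (Real.cosh lam), mul_assoc, this, mul_comm]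
    _ = (2:ℝ) ^ (k * m) * Real.cosh lam ^ k := by rw [mul_pow, ← pow_mul, mul_comm m k]

lemma chernoff_count {Ω : Type*} [Fintype Ω] (X : Ω → ℝ) (t lam : ℝ) (hlam : 0 ≤ lam)
    [DecidablePred fun H => t < X H] :
    (((Finset.univ.filter fun H => t < X H).card : ℝ))
      ≤ Real.exp (-(lam * t)) * ∑ H : Ω, Real.exp (lam * X H) := by
  have h1 : (((Finset.univ.filter fun H => t < X H).card : ℝ))
      ≤ ∑ H ∈ Finset.univ.filter fun H => t < X H, Real.exp (lam * (X H - t)) := by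
    rw [Finset.card_eq_sum_ones, Nat.cast_sum]
    refine Finset.sum_le_sum fun H hH => ?_
    simp only [Finset.mem_filter] at hH
    simpa using Real.one_le_exp (by nlinarith [hH.2])
  refine h1.trans ?_
  have h2 : ∀ H : Ω, Real.exp (lam * (X H - t)) = Real.exp (-(lam * t)) * Real.exp (lam * X H) := by
    intro H
    rw [← Real.exp_add]
    ring_nf
  calc ∑ H ∈ Finset.univ.filter fun H => t < X H, Real.exp (lam * (X H - t))
      ≤ ∑ H : Ω, Real.exp (lam * (X H - t)) :=
        Finset.sum_le_sum_of_subset_of_nonneg (Finset.filter_subset _ _)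
          (fun _ _ _ => (Real.exp_pos _).le)
    _ = _ := by rw [Finset.mul_sum]; exact Finset.sum_congr rfl fun H _ => h2 H

lemma tail_from_mgf {Ω : Type*} [Fintype Ω] (n : ℕ) (hn : 0 < n) (A : ℝ) (hA : 0 ≤ A)
    (X : Ω → ℝ) (hmgf : ∀ lam : ℝ, ∑ H : Ω, Real.exp (lam * X H) = A * Real.cosh lam ^ n)
    (t : ℝ) (ht : 0 ≤ t) [DecidablePred fun H => t < X H] :
    (((Finset.univ.filter fun H => t < X H).card : ℝ))
      ≤ A * Real.exp (-(t ^ 2 / (2 * n))) := by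
  have hn' : (0:ℝ) < n := by exact_mod_cast hn
  set lam := t / n with hlam
  have hlam0 : 0 ≤ lam := div_nonneg ht hn'.le
  refine (chernoff_count X t lam hlam0).trans ?_
  rw [hmgf lam]
  have h1 : Real.cosh lam ^ n ≤ Real.exp (lam ^ 2 / 2) ^ n :=
    pow_le_pow_left₀ (Real.cosh_pos _).le (Real.cosh_le_exp_half_sq lam) n
  have h2 : Real.exp (-(lam * t)) * (A * Real.cosh lam ^ n)
      ≤ Real.exp (-(lam * t)) * (A * Real.exp (lam ^ 2 / 2) ^ n) := by
    have := mul_le_mul_of_nonneg_left h1 hA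
    exact mul_le_mul_of_nonneg_left this (Real.exp_pos _).le
  refine h2.trans ?_
  rw [← Real.exp_nat_mul]
  have key : Real.exp (-(lam * t)) * Real.exp ((n:ℝ) * (lam ^ 2 / 2))
      = Real.exp (-(t^2/(2*n))) := by
    rw [← Real.exp_add]
    congr 1
    rw [hlam]
    field_simp
    ring
  calc Real.exp (-(lam * t)) * (A * Real.exp ((n:ℝ) * (lam ^ 2 / 2)))
      = A * (Real.exp (-(lam * t)) * Real.exp ((n:ℝ) * (lam ^ 2 / 2))) := by ring
    _ = A * Real.exp (-(t^2/(2*n))) := by rw [key]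
    _ ≤ _ := le_refl _

lemma mgf_balanced' (k m : ℕ) (S : Finset (Fin k)) (hS : S.Nonempty) (lam : ℝ) :
    ∑ H : Fin k × Fin m → Bool,
        Real.exp (lam * (fun H : Fin k × Fin m → Bool => ∑ j : Fin m, ∏ i ∈ S, sgn (H (i, j))) H)
      = (2:ℝ) ^ (k * m) * Real.cosh lam ^ m := by
  rw [mgf_balanced k m S hS lam, mul_pow, ← pow_mul]

lemma count_le_count {Ω : Type*} [Fintype Ω] (p q : Ω → Prop) [DecidablePred p] [DecidablePred q]
    (h : ∀ x, p x → q x) :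
    (Finset.univ.filter p).card ≤ (Finset.univ.filter q).card :=
  Finset.card_le_card (fun x hx => by
    simp only [Finset.mem_filter] at *; exact ⟨hx.1, h x hx.2⟩)

lemma measure_bad_S (k m : ℕ) (hm : 0 < m) (S : Finset (Fin k)) (hS : S.Nonempty)
    (t : ℝ) (ht : 0 ≤ t) :
    bipartiteER k m (1/2) (by norm_num)
        {H | t < |∑ j : Fin m, ∏ i ∈ S, sgn (H (i, j))|}
      ≤ ENNReal.ofReal (2 * Real.exp (-(t ^ 2 / (2 * m)))) := by
  classical
  set X : (Fin k × Fin m → Bool) → ℝ := fun H => ∑ j : Fin m, ∏ i ∈ S, sgn (H (i, j)) with hX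
  have hset : {H : Fin k × Fin m → Bool | t < |X H|}
      = ↑(Finset.univ.filter fun H => t < |X H|) := by
    ext H; simp
  rw [hset, bER_apply]
  refine ENNReal.ofReal_le_ofReal ?_
  have hsub : ∀ H, t < |X H| → t < X H ∨ t < -X H := fun H h => by
    rcases abs_cases (X H) with ⟨he, _⟩ | ⟨he, _⟩
    · left; rwa [he] at h
    · right; rwa [he] at h
  have hcard : ((Finset.univ.filter fun H => t < |X H|).card : ℝ)
      ≤ ((Finset.univ.filter fun H => t < X H).card : ℝ)
        + ((Finset.univ.filter fun H => t < -X H).card : ℝ) := by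
    have h1 : (Finset.univ.filter fun H => t < |X H|)
        ⊆ (Finset.univ.filter fun H => t < X H) ∪ (Finset.univ.filter fun H => t < -X H) := by
      intro H hH
      simp only [Finset.mem_filter, Finset.mem_union] at *
      rcases hsub H hH.2 with h | h
      · exact Or.inl ⟨hH.1, h⟩
      · exact Or.inr ⟨hH.1, h⟩
    calc ((Finset.univ.filter fun H => t < |X H|).card : ℝ)
        ≤ (((Finset.univ.filter fun H => t < X H) ∪ (Finset.univ.filter fun H => t < -X H)).card : ℝ) := by
          exact_mod_cast Finset.card_le_card h1
      _ ≤ _ := by exact_mod_cast Finset.card_union_le _ _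
  have hb1 : ((Finset.univ.filter fun H => t < X H).card : ℝ)
      ≤ (2:ℝ) ^ (k * m) * Real.exp (-(t ^ 2 / (2 * m))) :=
    tail_from_mgf m hm ((2:ℝ)^(k*m)) (by positivity) X (mgf_balanced' k m S hS) t ht
  have hb2 : ((Finset.univ.filter fun H => t < -X H).card : ℝ)
      ≤ (2:ℝ) ^ (k * m) * Real.exp (-(t ^ 2 / (2 * m))) := by
    refine tail_from_mgf m hm ((2:ℝ)^(k*m)) (by positivity) (fun H => -X H) ?_ t ht
    intro lam
    have : ∀ H, lam * -X H = (-lam) * X H := fun H => by ring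
    simp only [this]
    rw [mgf_balanced' k m S hS (-lam), Real.cosh_neg]
  have h2 : ((Finset.univ.filter fun H => t < |X H|).card : ℝ)
      ≤ (2:ℝ) ^ (k * m) * (2 * Real.exp (-(t ^ 2 / (2 * m)))) := by nlinarith
  have hpow : ((1:ℝ)/2) ^ (k*m) = ((2:ℝ) ^ (k*m))⁻¹ := by
    rw [one_div, inv_pow]
  rw [hpow]
  rw [mul_inv_le_iff₀ (by positivity)]
  linarith [h2]

lemma sgn_sum_eq (k m : ℕ) (v : Fin m) (H : Fin k × Fin m → Bool) :
    ∑ i : Fin k, sgn (H (i, v))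
      = 2 * ((Finset.univ.filter fun u : Fin k => H (u, v) = true).card : ℝ) - k := by
  have h1 : ∀ i : Fin k, sgn (H (i, v)) = if H (i, v) = true then (1:ℝ) else -1 := by
    intro i; cases h : H (i, v) <;> simp [sgn, h]
  simp only [h1]
  rw [Finset.sum_ite, Finset.sum_const, Finset.sum_const]
  have h2 := Finset.card_filter_add_card_filter_not (s := (Finset.univ : Finset (Fin k)))
    (p := fun u => H (u, v) = true)
  rw [Finset.card_univ, Fintype.card_fin] at h2
  have h3 : ((Finset.univ.filter fun x : Fin k => ¬ H (x, v) = true).card : ℝ)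
      = k - ((Finset.univ.filter fun x : Fin k => H (x, v) = true).card : ℝ) := by
    have h4 : ((Finset.univ.filter fun x : Fin k => H (x, v) = true).card : ℝ)
        + ((Finset.univ.filter fun x : Fin k => ¬ H (x, v) = true).card : ℝ) = k := by
      exact_mod_cast congrArg (Nat.cast (R := ℝ)) h2
    linarith
  rw [nsmul_eq_mul, nsmul_eq_mul, h3]
  ring

lemma measure_bad_v (k m : ℕ) (hk : 0 < k) (hm : 0 < m) (v : Fin m) (s : ℝ) (hs : 0 ≤ s) :
    bipartiteER k m (1/2) (by norm_num)
        {H | (k:ℝ)/2 + s < ((Finset.univ.filter fun u : Fin k => H (u, v) = true).card : ℝ)}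
      ≤ ENNReal.ofReal (Real.exp (-((2*s)^2 / (2*k)))) := by
  classical
  set X : (Fin k × Fin m → Bool) → ℝ := fun H => ∑ i : Fin k, sgn (H (i, v)) with hX
  have hset : {H : Fin k × Fin m → Bool |
        (k:ℝ)/2 + s < ((Finset.univ.filter fun u : Fin k => H (u, v) = true).card : ℝ)}
      = ↑(Finset.univ.filter fun H => 2*s < X H) := by
    ext H
    simp only [Set.mem_setOf_eq, Finset.coe_filter, Finset.mem_univ, true_and]
    rw [hX]
    simp only
    rw [sgn_sum_eq k m v H]
    constructor <;> intro h <;> linarith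
  rw [hset, bER_apply]
  refine ENNReal.ofReal_le_ofReal ?_
  have hb : ((Finset.univ.filter fun H => 2*s < X H).card : ℝ)
      ≤ (2:ℝ) ^ (k * m) * Real.exp (-((2*s) ^ 2 / (2 * k))) := by
    refine tail_from_mgf k hk ((2:ℝ)^(k*m)) (by positivity) X ?_ (2*s) (by positivity)
    intro lam
    exact mgf_degree k m hm v lam
  have hpow : ((1:ℝ)/2) ^ (k*m) = ((2:ℝ) ^ (k*m))⁻¹ := by rw [one_div, inv_pow]
  rw [hpow, mul_inv_le_iff₀ (by positivity)]
  linarith [hb]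

lemma card_S_bound (k r : ℕ) (hk : 2 ≤ k) (hr1 : 1 ≤ r) (hrk : r ≤ k) :
    (Finset.univ.filter fun S : Finset (Fin k) => S.Nonempty ∧ S.card ≤ r).card
      ≤ k ^ (r + 2) := by
  classical
  have hsub : (Finset.univ.filter fun S : Finset (Fin k) => S.Nonempty ∧ S.card ≤ r)
      ⊆ (Finset.range (r+1)).biUnion (fun i => Finset.powersetCard i Finset.univ) := by
    intro S hS
    simp only [Finset.mem_filter, Finset.mem_biUnion, Finset.mem_range,
      Finset.mem_powersetCard] at *
    exact ⟨S.card, Nat.lt_succ_of_le hS.2.2, Finset.subset_univ S, rfl⟩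
  refine (Finset.card_le_card hsub).trans ?_
  refine (Finset.card_biUnion_le).trans ?_
  have h1 : ∀ i ∈ Finset.range (r+1), (Finset.powersetCard i (Finset.univ : Finset (Fin k))).card
      ≤ k ^ r := by
    intro i hi
    rw [Finset.card_powersetCard, Finset.card_univ, Fintype.card_fin]
    exact (Nat.choose_le_pow _ _).trans (Nat.pow_le_pow_right (by omega)
      (Nat.lt_succ_iff.mp (Finset.mem_range.mp hi)))
  refine (Finset.sum_le_sum h1).trans ?_
  rw [Finset.sum_const, Finset.card_range, smul_eq_mul]
  have : r + 1 ≤ k * k := by nlinarith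
  calc (r+1) * k^r ≤ (k*k) * k^r := Nat.mul_le_mul_right _ this
    _ = k ^ (r+2) := by ring

lemma num1 (k r : ℕ) (hk : 2 ≤ k) (hr : 1 ≤ r) :
    (k:ℝ) ^ (r + 2) * (2 * Real.exp (-(25 * r * Real.log k / 2))) ≤ 1/256 := by
  have hk0 : (0:ℝ) < k := by positivity
  have hL : Real.log 2 ≤ Real.log k := Real.log_le_log (by norm_num) (by exact_mod_cast hk)
  have hL2 : (0:ℝ) < Real.log 2 := Real.log_pos (by norm_num)
  have hr1 : (1:ℝ) ≤ r := by exact_mod_cast hr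
  have hpow : (k:ℝ) ^ (r+2) = Real.exp ((r+2 : ℕ) * Real.log k) := by
    rw [Real.exp_nat_mul, Real.exp_log hk0]
  have hlog512 : (9:ℝ) * Real.log 2 = Real.log 512 := by
    rw [show (512:ℝ) = 2^(9:ℕ) by norm_num, Real.log_pow]
    push_cast; ring
  have h2 : (k:ℝ) ^ (r + 2) * (2 * Real.exp (-(25 * r * Real.log k / 2)))
      = 2 * Real.exp (((r+2:ℕ):ℝ) * Real.log k + -(25 * r * Real.log k / 2)) := by
    rw [hpow, Real.exp_add]; ring
  rw [h2]
  have hexp : ((r+2 : ℕ) : ℝ) * Real.log k + -(25 * r * Real.log k / 2)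
      ≤ -(9 * Real.log 2) := by
    push_cast
    nlinarith [mul_le_mul_of_nonneg_left hL (by linarith : (0:ℝ) ≤ 23 * r / 2 - 2),
      mul_nonneg (by linarith : (0:ℝ) ≤ 23 * r / 2 - 11) hL2.le]
  calc 2 * Real.exp (((r+2:ℕ):ℝ) * Real.log k + -(25 * r * Real.log k / 2))
      ≤ 2 * Real.exp (-(9 * Real.log 2)) := by
        have := Real.exp_le_exp.2 hexp
        linarith
    _ = 1/256 := by
        rw [hlog512, Real.exp_neg, Real.exp_log (by norm_num)]
        norm_num
    
lemma num2 (m : ℕ) (hm : 2 ≤ m) :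
    (m:ℝ) * Real.exp (-(50 * Real.log m)) ≤ 1/256 := by
  have hm0 : (0:ℝ) < m := by positivity
  have hL : Real.log 2 ≤ Real.log m := Real.log_le_log (by norm_num) (by exact_mod_cast hm)
  have hL2 : (0:ℝ) < Real.log 2 := Real.log_pos (by norm_num)
  have h1 : (m:ℝ) = Real.exp (Real.log m) := (Real.exp_log hm0).symm
  have hlog512 : (9:ℝ) * Real.log 2 = Real.log 512 := by
    rw [show (512:ℝ) = 2^(9:ℕ) by norm_num, Real.log_pow]
    push_cast; ring
  nth_rewrite 1 [h1]
  rw [← Real.exp_add]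
  have hexp : Real.log m + -(50 * Real.log m) ≤ -(9 * Real.log 2) := by nlinarith
  calc Real.exp (Real.log m + -(50 * Real.log m)) ≤ Real.exp (-(9 * Real.log 2)) :=
        Real.exp_le_exp.2 hexp
    _ ≤ 1/256 := by
        rw [hlog512, Real.exp_neg, Real.exp_log (by norm_num)]
        norm_num

theorem stmt_7 : ∃ C : ℝ, 0 < C ∧ ∀ k m r : ℕ, 2 ≤ k → 2 ≤ m → 1 ≤ r → r ≤ k →
    ENNReal.ofReal 0.99 ≤
      bipartiteER k m (1/2) (by norm_num)
        {H | FoldBalanced (fun i j => H (i, j)) r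
              (C * Real.sqrt ((r : ℝ) * m * Real.log k)) ∧
          ∀ v : Fin m, ((Finset.univ.filter fun u : Fin k => H (u, v) = true).card : ℝ)
            ≤ (k : ℝ) / 2 + C * Real.sqrt ((k : ℝ) * Real.log m)} := by
  classical
  refine ⟨5, by norm_num, ?_⟩
  intro k m r hk hm hr hrk
  have hk0 : 0 < k := by omega
  have hm0 : 0 < m := by omega
  have hkR : (1:ℝ) ≤ (k:ℝ) := by exact_mod_cast hk0
  have hmR : (1:ℝ) ≤ (m:ℝ) := by exact_mod_cast hm0
  have hlogk : 0 ≤ Real.log k := Real.log_nonneg hkR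
  have hlogm : 0 ≤ Real.log m := Real.log_nonneg hmR
  set t := 5 * Real.sqrt ((r:ℝ) * m * Real.log k) with hT
  set sS := 5 * Real.sqrt ((k:ℝ) * Real.log m) with hSS
  have ht0 : 0 ≤ t := by positivity
  have hs0 : 0 ≤ sS := by positivity
  set μ := bipartiteER k m (1/2) (by norm_num) with hμ
  set G := {H : Fin k × Fin m → Bool | FoldBalanced (fun i j => H (i, j)) r t ∧
      ∀ v : Fin m, ((Finset.univ.filter fun u : Fin k => H (u, v) = true).card : ℝ)
        ≤ (k : ℝ) / 2 + sS} with hG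
  show ENNReal.ofReal 0.99 ≤ μ G
  set ES : Finset (Fin k) → Set (Fin k × Fin m → Bool) :=
    fun S => {H | t < |∑ j : Fin m, ∏ i ∈ S, sgn (H (i, j))|} with hES
  set EV : Fin m → Set (Fin k × Fin m → Bool) :=
    fun v => {H | (k:ℝ)/2 + sS
      < ((Finset.univ.filter fun u : Fin k => H (u, v) = true).card : ℝ)} with hEV
  set 𝒮 := Finset.univ.filter fun S : Finset (Fin k) => S.Nonempty ∧ S.card ≤ r with h𝒮
  have hGc : Gᶜ ⊆ (⋃ S ∈ 𝒮, ES S) ∪ (⋃ v ∈ (Finset.univ : Finset (Fin m)), EV v) := by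
    intro H hH
    rw [Set.mem_compl_iff, hG, Set.mem_setOf_eq] at hH
    by_cases hbal : FoldBalanced (fun i j => H (i, j)) r t
    · have hv : ¬ ∀ v : Fin m, ((Finset.univ.filter fun u : Fin k => H (u, v) = true).card : ℝ)
          ≤ (k : ℝ) / 2 + sS := fun h => hH ⟨hbal, h⟩
      push_neg at hv
      obtain ⟨v, hv⟩ := hv
      exact Or.inr (Set.mem_iUnion₂.2 ⟨v, Finset.mem_univ v, hv⟩)
    · unfold FoldBalanced at hbal
      push_neg at hbal
      obtain ⟨S, h1, h2, h3⟩ := hbal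
      refine Or.inl (Set.mem_iUnion₂.2 ⟨S, ?_, h3⟩)
      rw [h𝒮, Finset.mem_filter]; exact ⟨Finset.mem_univ S, h1, h2⟩
  have hB1 : ∀ S ∈ 𝒮, μ (ES S) ≤ ENNReal.ofReal (2 * Real.exp (-(25 * r * Real.log k / 2))) := by
    intro S hS
    rw [h𝒮, Finset.mem_filter] at hS
    have hb := measure_bad_S k m hm0 S hS.2.1 t ht0
    have hexp : t^2/(2*(m:ℝ)) = 25 * r * Real.log k / 2 := by
      rw [hT, mul_pow, Real.sq_sqrt (by positivity)]
      have : (m:ℝ) ≠ 0 := by positivity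
      field_simp
      ring
    rwa [hexp] at hb
  have hB2 : ∀ v : Fin m, μ (EV v) ≤ ENNReal.ofReal (Real.exp (-(50 * Real.log m))) := by
    intro v
    have hb := measure_bad_v k m hk0 hm0 v sS hs0
    have hexp : (2*sS)^2/(2*(k:ℝ)) = 50 * Real.log m := by
      rw [hSS, mul_pow, mul_pow, Real.sq_sqrt (by positivity)]
      have : (k:ℝ) ≠ 0 := by positivity
      field_simp
      ring
    rwa [hexp] at hb
  have h1 : μ (⋃ S ∈ 𝒮, ES S) ≤ ENNReal.ofReal (1/256) := by
    refine (measure_biUnion_finset_le 𝒮 ES).trans ?_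
    refine (Finset.sum_le_sum hB1).trans ?_
    rw [Finset.sum_const, nsmul_eq_mul]
    calc (𝒮.card : ENNReal) * ENNReal.ofReal (2 * Real.exp (-(25 * r * Real.log k / 2)))
        ≤ ((k ^ (r+2) : ℕ) : ENNReal) * ENNReal.ofReal (2 * Real.exp (-(25 * r * Real.log k / 2))) := by
          exact mul_le_mul_left (Nat.cast_le.2 (card_S_bound k r hk hr hrk)) _
      _ = ENNReal.ofReal ((k:ℝ) ^ (r+2) * (2 * Real.exp (-(25 * r * Real.log k / 2)))) := by
          rw [← ENNReal.ofReal_natCast, ← ENNReal.ofReal_mul (by positivity)]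
          push_cast
          ring_nf
      _ ≤ ENNReal.ofReal (1/256) := ENNReal.ofReal_le_ofReal (num1 k r hk hr)
  have h2 : μ (⋃ v ∈ (Finset.univ : Finset (Fin m)), EV v) ≤ ENNReal.ofReal (1/256) := by
    refine (measure_biUnion_finset_le Finset.univ EV).trans ?_
    refine (Finset.sum_le_sum (fun v _ => hB2 v)).trans ?_
    rw [Finset.sum_const, nsmul_eq_mul, Finset.card_univ, Fintype.card_fin]
    calc ((m:ℕ) : ENNReal) * ENNReal.ofReal (Real.exp (-(50 * Real.log m)))
        = ENNReal.ofReal ((m:ℝ) * Real.exp (-(50 * Real.log m))) := by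
          rw [← ENNReal.ofReal_natCast, ← ENNReal.ofReal_mul (by positivity)]
      _ ≤ ENNReal.ofReal (1/256) := ENNReal.ofReal_le_ofReal (num2 m hm)
  have hmain : μ Gᶜ ≤ ENNReal.ofReal (1/128) := by
    refine (measure_mono hGc).trans ?_
    refine (measure_union_le _ _).trans ?_
    calc μ (⋃ S ∈ 𝒮, ES S) + μ (⋃ v ∈ (Finset.univ : Finset (Fin m)), EV v)
        ≤ ENNReal.ofReal (1/256) + ENNReal.ofReal (1/256) := add_le_add h1 h2
      _ = ENNReal.ofReal (1/128) := by
          rw [← ENNReal.ofReal_add (by norm_num) (by norm_num)]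
          norm_num
  have hGmeas : MeasurableSet G := (Set.to_countable G).measurableSet
  have hprob : IsProbabilityMeasure μ := by
    rw [hμ, bipartiteER]
    infer_instance
  have hcompl : μ G = 1 - μ Gᶜ := by
    have h := prob_compl_eq_one_sub (μ := μ) hGmeas.compl
    rwa [compl_compl] at h
  rw [hcompl]
  calc ENNReal.ofReal 0.99 ≤ 1 - ENNReal.ofReal (1/128) := by
        rw [← ENNReal.ofReal_one, ← ENNReal.ofReal_sub _ (by norm_num)]
        exact ENNReal.ofReal_le_ofReal (by norm_num)
    _ ≤ 1 - μ Gᶜ := tsub_le_tsub_left hmain 1
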